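/- For every triad (b,c,d) in the real Cayley–Dickson algebra 𝔸ₙ (all εᵢ = 1), the triple associator satisfies T(b,c,d) = 2·((b·d)·c); in particular T(b,c,d) ≠ 0, so every triad is non-associative. -/

import Mathlib

noncomputable section

/-- The real Cayley–Dickson algebra carrier: `CD 0 = ℝ`, `CD (n+1) = CD n × CD n`. -/
def CD : ℕ → Type
  | 0 => ℝ
  | n + 1 => CD n × CD n

instance CD.instAddCommGroup : (n : ℕ) → AddCommGroup (CD n)
  | 0 => inferInstanceAs (AddCommGroup ℝ)
  | n + 1 =>
    letI := CD.instAddCommGroup n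
    inferInstanceAs (AddCommGroup (CD n × CD n))

instance CD.instModule : (n : ℕ) → Module ℝ (CD n)
  | 0 => inferInstanceAs (Module ℝ ℝ)
  | n + 1 =>
    letI := CD.instModule n
    inferInstanceAs (Module ℝ (CD n × CD n))

/-- The unit of the Cayley–Dickson algebra. -/
def CD.one : (n : ℕ) → CD n
  | 0 => (1 : ℝ)
  | n + 1 => (CD.one n, 0)

/-- Conjugation: `(a, b)* = (a*, -b)`, identity on `ℝ`. -/
def CD.conj : (n : ℕ) → CD n → CD n
  | 0, a => a
  | n + 1, x => (CD.conj n x.1, -x.2)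

/-- Cayley–Dickson multiplication with sign vector `ε`:
`(a,b)·(c,d) = (a·c − ε (n+1) • (d*·b), d·a + b·c*)`. -/
def CD.mul (ε : ℕ → ℝ) : (n : ℕ) → CD n → CD n → CD n
  | 0, a, c => (show ℝ from a) * (show ℝ from c)
  | n + 1, x, y =>
    (CD.mul ε n x.1 y.1 - ε (n + 1) • CD.mul ε n (CD.conj n y.2) x.2,
     CD.mul ε n y.2 x.1 + CD.mul ε n x.2 (CD.conj n y.1))

/-- The standard basis element `e α` of `CD n`, for `α ⊆ {1,…,n}`. -/
def CD.basis : (n : ℕ) → Finset ℕ → CD n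
  | 0, _ => (1 : ℝ)
  | n + 1, α =>
    if n + 1 ∈ α then ((0 : CD n), CD.basis n (α.erase (n + 1)))
    else (CD.basis n α, (0 : CD n))

/-- `α` indexes a pure basis element of `CD n`. -/
def CD.IsPure (n : ℕ) (α : Finset ℕ) : Prop :=
  α.Nonempty ∧ α ⊆ Finset.Icc 1 n

/-- The associator `[x,y,z] = (x·y)·z − x·(y·z)`. -/
def CD.assoc (ε : ℕ → ℝ) (n : ℕ) (x y z : CD n) : CD n :=
  CD.mul ε n (CD.mul ε n x y) z - CD.mul ε n x (CD.mul ε n y z)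

/-- A triad: indices of three pairwise distinct pure basis elements `b, c, d`
with `d ≠ ±(b·c)` (all signs `εᵢ = 1`). -/
def CD.IsTriad (n : ℕ) (α β γ : Finset ℕ) : Prop :=
  CD.IsPure n α ∧ CD.IsPure n β ∧ CD.IsPure n γ ∧
  α ≠ β ∧ α ≠ γ ∧ β ≠ γ ∧
  CD.basis n γ ≠ CD.mul (fun _ => 1) n (CD.basis n α) (CD.basis n β) ∧
  CD.basis n γ ≠ -CD.mul (fun _ => 1) n (CD.basis n α) (CD.basis n β)

/-- Multiplication with all signs `εᵢ = 1`. -/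
abbrev CD.mul1 (n : ℕ) : CD n → CD n → CD n := CD.mul (fun _ => 1) n

/-- Associator with all signs `εᵢ = 1`. -/
abbrev CD.assoc1 (n : ℕ) : CD n → CD n → CD n → CD n := CD.assoc (fun _ => 1) n

open scoped symmDiff

-- basic structure lemmas
lemma CD.zero_succ (n : ℕ) : (0 : CD (n+1)) = ((0 : CD n), (0 : CD n)) := rfl
lemma CD.add_succ' (n : ℕ) (x y : CD (n+1)) :
    x + y = ((x.1 + y.1 : CD n), (x.2 + y.2 : CD n)) := rfl
lemma CD.neg_succ' (n : ℕ) (x : CD (n+1)) : -x = ((-x.1 : CD n), (-x.2 : CD n)) := rfl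
lemma CD.smul_succ' (n : ℕ) (s : ℝ) (x : CD (n+1)) :
    s • x = ((s • x.1 : CD n), (s • x.2 : CD n)) := rfl

lemma CD.conj_zero : ∀ n : ℕ, CD.conj n (0 : CD n) = 0
  | 0 => rfl
  | n + 1 => by
    show (CD.conj n (0:CD n), -(0:CD n)) = _
    rw [CD.conj_zero n, neg_zero]; rfl

lemma CD.conj_add : ∀ (n : ℕ) (x y : CD n),
    CD.conj n (x + y) = CD.conj n x + CD.conj n y
  | 0, x, y => rfl
  | n + 1, x, y => by
    show (CD.conj n (x.1 + y.1), -(x.2 + y.2)) = _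
    rw [CD.conj_add n, neg_add]; rfl

lemma CD.conj_neg : ∀ (n : ℕ) (x : CD n), CD.conj n (-x) = -CD.conj n x
  | 0, x => rfl
  | n + 1, x => by
    show (CD.conj n (-x.1), -(-x.2)) = _
    rw [CD.conj_neg n]; rfl

lemma CD.conj_sub (n : ℕ) (x y : CD n) :
    CD.conj n (x - y) = CD.conj n x - CD.conj n y := by
  rw [sub_eq_add_neg, CD.conj_add, CD.conj_neg, sub_eq_add_neg]

lemma CD.conj_smul : ∀ (n : ℕ) (s : ℝ) (x : CD n),
    CD.conj n (s • x) = s • CD.conj n x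
  | 0, s, x => rfl
  | n + 1, s, x => by
    show (CD.conj n (s • x.1), -(s • x.2)) = _
    rw [CD.conj_smul n, ← smul_neg]; rfl

lemma CD.conj_conj : ∀ (n : ℕ) (x : CD n), CD.conj n (CD.conj n x) = x
  | 0, x => rfl
  | n + 1, x => by
    show (CD.conj n (CD.conj n x.1), -(-x.2)) = _
    rw [CD.conj_conj n, neg_neg]
    rfl

lemma CD.mul1_succ (n : ℕ) (x y : CD (n+1)) :
    CD.mul1 (n+1) x y
      = ((CD.mul1 n x.1 y.1 - CD.mul1 n (CD.conj n y.2) x.2 : CD n),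
         (CD.mul1 n y.2 x.1 + CD.mul1 n x.2 (CD.conj n y.1) : CD n)) := by
  show (CD.mul1 n x.1 y.1 - (1:ℝ) • CD.mul1 n (CD.conj n y.2) x.2, _) = _
  rw [one_smul]

mutual
lemma CD.mul1_zero_left : ∀ (n : ℕ) (x : CD n), CD.mul1 n 0 x = 0
  | 0, x => show (0:ℝ) * (show ℝ from x) = 0 from zero_mul _
  | n + 1, x => by
    erw [CD.zero_succ, CD.mul1_succ]
    show ((CD.mul1 n 0 x.1 - CD.mul1 n (CD.conj n x.2) 0 : CD n),
          (CD.mul1 n x.2 0 + CD.mul1 n 0 (CD.conj n x.1) : CD n)) = _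
    rw [CD.mul1_zero_left n, CD.mul1_zero_left n,
        CD.mul1_zero_right n, CD.mul1_zero_right n]
    rw [sub_zero, add_zero]

lemma CD.mul1_zero_right : ∀ (n : ℕ) (x : CD n), CD.mul1 n x 0 = 0
  | 0, x => show (show ℝ from x) * (0:ℝ) = 0 from mul_zero _
  | n + 1, x => by
    erw [CD.zero_succ, CD.mul1_succ]
    show ((CD.mul1 n x.1 0 - CD.mul1 n (CD.conj n 0) x.2 : CD n),
          (CD.mul1 n 0 x.1 + CD.mul1 n x.2 (CD.conj n 0) : CD n)) = _
    rw [CD.conj_zero, CD.mul1_zero_left n, CD.mul1_zero_left n,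
        CD.mul1_zero_right n, CD.mul1_zero_right n]
    rw [sub_zero, add_zero]
end

mutual
lemma CD.mul1_smul_left : ∀ (n : ℕ) (s : ℝ) (x y : CD n),
    CD.mul1 n (s • x) y = s • CD.mul1 n x y
  | 0, s, x, y => smul_mul_assoc s (show ℝ from x) (show ℝ from y)
  | n + 1, s, x, y => by
    erw [CD.smul_succ', CD.mul1_succ, CD.mul1_succ]
    show ((CD.mul1 n (s • x.1) y.1 - CD.mul1 n (CD.conj n y.2) (s • x.2) : CD n),
          (CD.mul1 n y.2 (s • x.1) + CD.mul1 n (s • x.2) (CD.conj n y.1) : CD n)) = _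
    rw [CD.mul1_smul_left n, CD.mul1_smul_left n, CD.mul1_smul_right n,
        CD.mul1_smul_right n, ← smul_sub, ← smul_add]
    rfl

lemma CD.mul1_smul_right : ∀ (n : ℕ) (s : ℝ) (x y : CD n),
    CD.mul1 n x (s • y) = s • CD.mul1 n x y
  | 0, s, x, y => mul_smul_comm s (show ℝ from x) (show ℝ from y)
  | n + 1, s, x, y => by
    erw [CD.smul_succ', CD.mul1_succ, CD.mul1_succ]
    show ((CD.mul1 n x.1 (s • y.1) - CD.mul1 n (CD.conj n (s • y.2)) x.2 : CD n),
          (CD.mul1 n (s • y.2) x.1 + CD.mul1 n x.2 (CD.conj n (s • y.1)) : CD n)) = _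
    rw [CD.conj_smul, CD.conj_smul, CD.mul1_smul_left n, CD.mul1_smul_left n,
        CD.mul1_smul_right n, CD.mul1_smul_right n, ← smul_sub, ← smul_add]
    rfl
end

lemma CD.mul1_neg_left (n : ℕ) (x y : CD n) : CD.mul1 n (-x) y = -CD.mul1 n x y := by
  rw [← neg_one_smul ℝ x, CD.mul1_smul_left, neg_one_smul]

lemma CD.mul1_neg_right (n : ℕ) (x y : CD n) : CD.mul1 n x (-y) = -CD.mul1 n x y := by
  rw [← neg_one_smul ℝ y, CD.mul1_smul_right, neg_one_smul]

lemma CD.conj_mul1 : ∀ (n : ℕ) (x y : CD n),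
    CD.conj n (CD.mul1 n x y) = CD.mul1 n (CD.conj n y) (CD.conj n x)
  | 0, x, y => show (show ℝ from x) * (show ℝ from y) = (show ℝ from y) * (show ℝ from x) from mul_comm _ _
  | n + 1, x, y => by
    rw [CD.mul1_succ]
    show ((CD.conj n (CD.mul1 n x.1 y.1 - CD.mul1 n (CD.conj n y.2) x.2) : CD n),
          (-(CD.mul1 n y.2 x.1 + CD.mul1 n x.2 (CD.conj n y.1)) : CD n)) = _
    rw [CD.conj_sub, CD.conj_mul1 n, CD.conj_mul1 n, CD.conj_conj]
    have hrhs : CD.mul1 (n+1) (CD.conj (n+1) y) (CD.conj (n+1) x)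
        = ((CD.mul1 n (CD.conj n y.1) (CD.conj n x.1)
            - CD.mul1 n (CD.conj n (-x.2)) (-y.2) : CD n),
           (CD.mul1 n (-x.2) (CD.conj n y.1)
            + CD.mul1 n (-y.2) (CD.conj n (CD.conj n x.1)) : CD n)) := by
      rw [CD.mul1_succ]; rfl
    rw [hrhs, CD.conj_neg, CD.conj_conj, CD.mul1_neg_left, CD.mul1_neg_left,
        CD.mul1_neg_right, neg_neg, neg_add, CD.mul1_neg_left]
    have : -CD.mul1 n y.2 x.1 + -CD.mul1 n x.2 (CD.conj n y.1)
        = -CD.mul1 n x.2 (CD.conj n y.1) + -CD.mul1 n y.2 x.1 := add_comm _ _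
    rw [this]

lemma CD.basis_succ_mem (n : ℕ) (α : Finset ℕ) (h : n + 1 ∈ α) :
    CD.basis (n+1) α = ((0 : CD n), CD.basis n (α.erase (n+1))) := by
  erw [CD.basis, if_pos h]

lemma CD.basis_succ_not_mem (n : ℕ) (α : Finset ℕ) (h : n + 1 ∉ α) :
    CD.basis (n+1) α = (CD.basis n α, (0 : CD n)) := by
  erw [CD.basis, if_neg h]

lemma CD.basis_ne_zero : ∀ (n : ℕ) (α : Finset ℕ), CD.basis n α ≠ 0
  | 0, α => show (1:ℝ) ≠ 0 from one_ne_zero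
  | n + 1, α => by
    by_cases h : n + 1 ∈ α
    · rw [CD.basis_succ_mem n α h, CD.zero_succ]
      intro hx
      exact CD.basis_ne_zero n (α.erase (n+1)) (congrArg Prod.snd hx)
    · rw [CD.basis_succ_not_mem n α h, CD.zero_succ]
      intro hx
      exact CD.basis_ne_zero n α (congrArg Prod.fst hx)

lemma CD.conj_basis_pure : ∀ (n : ℕ) (α : Finset ℕ), α.Nonempty → α ⊆ Finset.Icc 1 n →
    CD.conj n (CD.basis n α) = -CD.basis n α
  | 0, α, hne, hsub => absurd (hsub hne.choose_spec) (by simp)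
  | n + 1, α, hne, hsub => by
    by_cases h : n + 1 ∈ α
    · rw [CD.basis_succ_mem n α h]
      show ((CD.conj n 0 : CD n), (-CD.basis n (α.erase (n+1)) : CD n)) = _
      erw [CD.conj_zero, CD.neg_succ', neg_zero]
    · rw [CD.basis_succ_not_mem n α h]
      show ((CD.conj n (CD.basis n α) : CD n), (-(0:CD n) : CD n)) = _
      have hsub' : α ⊆ Finset.Icc 1 n := by
        intro x hx
        have := hsub hx
        simp only [Finset.mem_Icc] at this ⊢
        refine ⟨this.1, ?_⟩
        rcases Nat.lt_or_ge x (n+1) with h' | h'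
        · omega
        · exact absurd (le_antisymm this.2 h') (fun e => h (e ▸ hx))
      erw [CD.conj_basis_pure n α hne hsub', CD.neg_succ', neg_zero]

lemma CD.conj_basis_empty : ∀ (n : ℕ), CD.conj n (CD.basis n ∅) = CD.basis n ∅
  | 0 => rfl
  | n + 1 => by
    rw [CD.basis_succ_not_mem n ∅ (by simp)]
    show ((CD.conj n (CD.basis n ∅) : CD n), (-(0:CD n) : CD n)) = _
    rw [CD.conj_basis_empty n, neg_zero]

lemma CD.conj_basis_sign (n : ℕ) (α : Finset ℕ) (h : α ⊆ Finset.Icc 1 n) :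
    ∃ t : ℝ, (t = 1 ∨ t = -1) ∧ CD.conj n (CD.basis n α) = t • CD.basis n α := by
  rcases α.eq_empty_or_nonempty with rfl | hne
  · exact ⟨1, Or.inl rfl, by rw [CD.conj_basis_empty, one_smul]⟩
  · exact ⟨-1, Or.inr rfl, by rw [CD.conj_basis_pure n α hne h, neg_one_smul]⟩

lemma Finset.sub_Icc_of_not_mem {n : ℕ} {α : Finset ℕ}
    (h : α ⊆ Finset.Icc 1 (n+1)) (hn : n + 1 ∉ α) : α ⊆ Finset.Icc 1 n := by
  intro x hx
  have h1 := h hx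
  simp only [Finset.mem_Icc] at h1 ⊢
  refine ⟨h1.1, ?_⟩
  rcases Nat.lt_or_ge x (n+1) with h' | h'
  · omega
  · exact absurd (le_antisymm h1.2 h') (fun e => hn (e ▸ hx))

lemma Finset.erase_sub_Icc {n : ℕ} {α : Finset ℕ}
    (h : α ⊆ Finset.Icc 1 (n+1)) : α.erase (n+1) ⊆ Finset.Icc 1 n :=
  Finset.sub_Icc_of_not_mem (le_trans (Finset.erase_subset _ _) h)
    (Finset.notMem_erase _ _)

lemma Finset.symmDiff_erase_right {α β : Finset ℕ} {k : ℕ} (h : k ∉ α) :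
    (α ∆ β).erase k = α ∆ (β.erase k) := by
  ext x
  by_cases hx : x = k <;>
    simp [Finset.mem_symmDiff, Finset.mem_erase, hx, h] <;> tauto

lemma Finset.symmDiff_erase_left {α β : Finset ℕ} {k : ℕ} (h : k ∉ β) :
    (α ∆ β).erase k = (α.erase k) ∆ β := by
  ext x
  by_cases hx : x = k <;>
    simp [Finset.mem_symmDiff, Finset.mem_erase, hx, h] <;> tauto

lemma Finset.symmDiff_erase_both {α β : Finset ℕ} {k : ℕ} (h1 : k ∈ α) (h2 : k ∈ β) :
    α ∆ β = (α.erase k) ∆ (β.erase k) := by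
  ext x
  by_cases hx : x = k <;>
    simp [Finset.mem_symmDiff, Finset.mem_erase, hx, h1, h2] <;> tauto

lemma CD.mul1_basis : ∀ (n : ℕ) (α β : Finset ℕ),
    α ⊆ Finset.Icc 1 n → β ⊆ Finset.Icc 1 n →
    ∃ s : ℝ, (s = 1 ∨ s = -1) ∧
      CD.mul1 n (CD.basis n α) (CD.basis n β) = s • CD.basis n (α ∆ β)
  | 0, α, β, _, _ =>
    ⟨1, Or.inl rfl, show (1:ℝ) * (1:ℝ) = (1:ℝ) • (1:ℝ) by norm_num⟩
  | n + 1, α, β, hα, hβ => by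
    by_cases h1 : n + 1 ∈ α <;> by_cases h2 : n + 1 ∈ β
    · -- both contain n+1
      obtain ⟨s, hs, hmul⟩ := CD.mul1_basis n (β.erase (n+1)) (α.erase (n+1))
        (Finset.erase_sub_Icc hβ) (Finset.erase_sub_Icc hα)
      obtain ⟨t, ht, hconj⟩ := CD.conj_basis_sign n (β.erase (n+1))
        (Finset.erase_sub_Icc hβ)
      refine ⟨-(t*s), by rcases hs with rfl|rfl <;> rcases ht with rfl|rfl <;> norm_num, ?_⟩
      erw [CD.basis_succ_mem n α h1, CD.basis_succ_mem n β h2, CD.mul1_succ]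
      have hnm : n + 1 ∉ α ∆ β := by simp [Finset.mem_symmDiff, h1, h2]
      erw [CD.basis_succ_not_mem n _ hnm, CD.smul_succ']
      show ((CD.mul1 n 0 0 - CD.mul1 n (CD.conj n (CD.basis n (β.erase (n+1))))
              (CD.basis n (α.erase (n+1))) : CD n),
            (CD.mul1 n (CD.basis n (β.erase (n+1))) 0
              + CD.mul1 n (CD.basis n (α.erase (n+1))) (CD.conj n 0) : CD n)) = _
      rw [CD.conj_zero, CD.mul1_zero_left, CD.mul1_zero_right, CD.mul1_zero_right,
          hconj, CD.mul1_smul_left, hmul, zero_sub, add_zero, smul_smul, smul_zero,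
          Finset.symmDiff_erase_both h1 h2, symmDiff_comm, neg_smul]
    · -- n+1 ∈ α, n+1 ∉ β
      obtain ⟨s, hs, hmul⟩ := CD.mul1_basis n (α.erase (n+1)) β
        (Finset.erase_sub_Icc hα) (Finset.sub_Icc_of_not_mem hβ h2)
      obtain ⟨t, ht, hconj⟩ := CD.conj_basis_sign n β (Finset.sub_Icc_of_not_mem hβ h2)
      refine ⟨t*s, by rcases hs with rfl|rfl <;> rcases ht with rfl|rfl <;> norm_num, ?_⟩
      erw [CD.basis_succ_mem n α h1, CD.basis_succ_not_mem n β h2, CD.mul1_succ]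
      have hnm : n + 1 ∈ α ∆ β := by simp [Finset.mem_symmDiff, h1, h2]
      erw [CD.basis_succ_mem n _ hnm, CD.smul_succ']
      show ((CD.mul1 n 0 (CD.basis n β) - CD.mul1 n (CD.conj n 0)
              (CD.basis n (α.erase (n+1))) : CD n),
            (CD.mul1 n 0 0
              + CD.mul1 n (CD.basis n (α.erase (n+1))) (CD.conj n (CD.basis n β)) : CD n)) = _
      rw [CD.conj_zero, CD.mul1_zero_left, CD.mul1_zero_left, CD.mul1_zero_right,
          hconj, CD.mul1_smul_right, hmul, sub_zero, zero_add, smul_smul, smul_zero,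
          Finset.symmDiff_erase_left h2]
    · -- n+1 ∉ α, n+1 ∈ β
      obtain ⟨s, hs, hmul⟩ := CD.mul1_basis n (β.erase (n+1)) α
        (Finset.erase_sub_Icc hβ) (Finset.sub_Icc_of_not_mem hα h1)
      refine ⟨s, hs, ?_⟩
      erw [CD.basis_succ_not_mem n α h1, CD.basis_succ_mem n β h2, CD.mul1_succ]
      have hnm : n + 1 ∈ α ∆ β := by simp [Finset.mem_symmDiff, h1, h2]
      erw [CD.basis_succ_mem n _ hnm, CD.smul_succ']
      show ((CD.mul1 n (CD.basis n α) 0 - CD.mul1 n (CD.conj n (CD.basis n (β.erase (n+1)))) 0 : CD n),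
            (CD.mul1 n (CD.basis n (β.erase (n+1))) (CD.basis n α)
              + CD.mul1 n 0 (CD.conj n 0) : CD n)) = _
      rw [CD.mul1_zero_left, CD.mul1_zero_right, CD.mul1_zero_right,
          hmul, sub_zero, add_zero, smul_zero,
          Finset.symmDiff_erase_right h1, symmDiff_comm]
    · -- neither
      obtain ⟨s, hs, hmul⟩ := CD.mul1_basis n α β
        (Finset.sub_Icc_of_not_mem hα h1) (Finset.sub_Icc_of_not_mem hβ h2)
      refine ⟨s, hs, ?_⟩
      erw [CD.basis_succ_not_mem n α h1, CD.basis_succ_not_mem n β h2, CD.mul1_succ]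
      have hnm : n + 1 ∉ α ∆ β := by simp [Finset.mem_symmDiff, h1, h2]
      erw [CD.basis_succ_not_mem n _ hnm, CD.smul_succ']
      show ((CD.mul1 n (CD.basis n α) (CD.basis n β) - CD.mul1 n (CD.conj n 0) 0 : CD n),
            (CD.mul1 n 0 (CD.basis n α) + CD.mul1 n 0 (CD.conj n (CD.basis n β)) : CD n)) = _
      rw [CD.mul1_zero_left, CD.mul1_zero_left, CD.mul1_zero_right,
          hmul, sub_zero, add_zero, smul_zero]

lemma Finset.symmDiff_sub_Icc {α β S : Finset ℕ} (h1 : α ⊆ S) (h2 : β ⊆ S) :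
    α ∆ β ⊆ S := by
  intro x hx
  rw [Finset.mem_symmDiff] at hx
  rcases hx with ⟨h, _⟩ | ⟨h, _⟩
  · exact h1 h
  · exact h2 h

lemma CD.basis_anticomm (n : ℕ) (α β : Finset ℕ) (hαne : α.Nonempty) (hβne : β.Nonempty)
    (hαs : α ⊆ Finset.Icc 1 n) (hβs : β ⊆ Finset.Icc 1 n) (hne : α ≠ β) :
    CD.mul1 n (CD.basis n β) (CD.basis n α)
      = -CD.mul1 n (CD.basis n α) (CD.basis n β) := by
  obtain ⟨s, hs, hmul⟩ := CD.mul1_basis n α β hαs hβs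
  have hsd_ne : (α ∆ β).Nonempty := by
    rw [Finset.nonempty_iff_ne_empty]
    intro hemp
    exact hne (symmDiff_eq_bot.mp hemp)
  have hsd_sub : α ∆ β ⊆ Finset.Icc 1 n := Finset.symmDiff_sub_Icc hαs hβs
  have key : CD.conj n (CD.mul1 n (CD.basis n α) (CD.basis n β))
      = -(CD.mul1 n (CD.basis n α) (CD.basis n β)) := by
    rw [hmul, CD.conj_smul, CD.conj_basis_pure n _ hsd_ne hsd_sub, smul_neg]
  rw [CD.conj_mul1, CD.conj_basis_pure n α hαne hαs, CD.conj_basis_pure n β hβne hβs,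
      CD.mul1_neg_left, CD.mul1_neg_right, neg_neg] at key
  exact key

/-- For every triad `(b,c,d)` the triple associator
`T(b,c,d) = [b,d,c] − [d,c,b] + [c,b,d]` equals `2·((b·d)·c)` and is nonzero. -/
theorem stmt6 (n : ℕ) (α β γ : Finset ℕ) (h : CD.IsTriad n α β γ)
    (b c d : CD n) (hb : b = CD.basis n α) (hc : c = CD.basis n β)
    (hd : d = CD.basis n γ) :
    CD.assoc1 n b d c - CD.assoc1 n d c b + CD.assoc1 n c b d
        = (2 : ℝ) • CD.mul1 n (CD.mul1 n b d) c ∧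
    CD.assoc1 n b d c - CD.assoc1 n d c b + CD.assoc1 n c b d ≠ 0 := by
  obtain ⟨⟨hαne, hαs⟩, ⟨hβne, hβs⟩, ⟨hγne, hγs⟩, hαβ, hαγ, hβγ, hd1, hd2⟩ := h
  subst hb hc hd
  obtain ⟨s, hs, hab⟩ := CD.mul1_basis n α β hαs hβs
  have hγ' : γ ≠ α ∆ β := by
    intro e
    rcases hs with rfl | rfl
    · rw [← e, one_smul] at hab
      exact hd1 hab.symm
    · rw [← e, neg_one_smul] at hab
      have : CD.basis n γ = -CD.mul1 n (CD.basis n α) (CD.basis n β) := by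
        rw [hab, neg_neg]
      exact hd2 this
  have h1 : α ≠ γ ∆ β := by
    intro e; apply hγ'; rw [e, symmDiff_symmDiff_cancel_right]
  have h2 : γ ≠ β ∆ α := by rw [symmDiff_comm]; exact hγ'
  have h3 : β ≠ α ∆ γ := by
    intro e; apply hγ'; rw [e, symmDiff_symmDiff_cancel_left]
  have nαγ : (α ∆ γ).Nonempty :=
    Finset.nonempty_iff_ne_empty.mpr (fun e => hαγ (symmDiff_eq_bot.mp e))
  have nγβ : (γ ∆ β).Nonempty :=
    Finset.nonempty_iff_ne_empty.mpr (fun e => hβγ (symmDiff_eq_bot.mp e).symm)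
  have nβα : (β ∆ α).Nonempty :=
    Finset.nonempty_iff_ne_empty.mpr (fun e => hαβ (symmDiff_eq_bot.mp e).symm)
  have sαγ : α ∆ γ ⊆ Finset.Icc 1 n := Finset.symmDiff_sub_Icc hαs hγs
  have sγβ : γ ∆ β ⊆ Finset.Icc 1 n := Finset.symmDiff_sub_Icc hγs hβs
  have sβα : β ∆ α ⊆ Finset.Icc 1 n := Finset.symmDiff_sub_Icc hβs hαs
  obtain ⟨s1, hs1, hbd⟩ := CD.mul1_basis n α γ hαs hγs
  obtain ⟨s2, hs2, hdc⟩ := CD.mul1_basis n γ β hγs hβs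
  obtain ⟨s3, hs3, hcb⟩ := CD.mul1_basis n β α hβs hαs
  have e1 : CD.mul1 n (CD.basis n α) (CD.mul1 n (CD.basis n γ) (CD.basis n β))
      = -CD.mul1 n (CD.mul1 n (CD.basis n γ) (CD.basis n β)) (CD.basis n α) := by
    rw [hdc, CD.mul1_smul_right, CD.mul1_smul_left,
        CD.basis_anticomm n (γ ∆ β) α nγβ hαne sγβ hαs (Ne.symm h1), smul_neg]
  have e2 : CD.mul1 n (CD.basis n γ) (CD.mul1 n (CD.basis n β) (CD.basis n α))
      = -CD.mul1 n (CD.mul1 n (CD.basis n β) (CD.basis n α)) (CD.basis n γ) := by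
    rw [hcb, CD.mul1_smul_right, CD.mul1_smul_left,
        CD.basis_anticomm n (β ∆ α) γ nβα hγne sβα hγs (Ne.symm h2), smul_neg]
  have e3 : CD.mul1 n (CD.basis n β) (CD.mul1 n (CD.basis n α) (CD.basis n γ))
      = -CD.mul1 n (CD.mul1 n (CD.basis n α) (CD.basis n γ)) (CD.basis n β) := by
    rw [hbd, CD.mul1_smul_right, CD.mul1_smul_left,
        CD.basis_anticomm n (α ∆ γ) β nαγ hβne sαγ hβs (Ne.symm h3), smul_neg]
  have heq : CD.assoc1 n (CD.basis n α) (CD.basis n γ) (CD.basis n β)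
        - CD.assoc1 n (CD.basis n γ) (CD.basis n β) (CD.basis n α)
        + CD.assoc1 n (CD.basis n β) (CD.basis n α) (CD.basis n γ)
      = (2 : ℝ) • CD.mul1 n (CD.mul1 n (CD.basis n α) (CD.basis n γ)) (CD.basis n β) := by
    show CD.mul1 n (CD.mul1 n (CD.basis n α) (CD.basis n γ)) (CD.basis n β)
        - CD.mul1 n (CD.basis n α) (CD.mul1 n (CD.basis n γ) (CD.basis n β))
        - (CD.mul1 n (CD.mul1 n (CD.basis n γ) (CD.basis n β)) (CD.basis n α)
          - CD.mul1 n (CD.basis n γ) (CD.mul1 n (CD.basis n β) (CD.basis n α)))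
        + (CD.mul1 n (CD.mul1 n (CD.basis n β) (CD.basis n α)) (CD.basis n γ)
          - CD.mul1 n (CD.basis n β) (CD.mul1 n (CD.basis n α) (CD.basis n γ))) = _
    rw [e1, e2, e3, two_smul]
    abel
  refine ⟨heq, ?_⟩
  rw [heq]
  obtain ⟨s4, hs4, hwc⟩ := CD.mul1_basis n (α ∆ γ) β sαγ hβs
  rw [hbd, CD.mul1_smul_left, hwc]
  refine smul_ne_zero two_ne_zero (smul_ne_zero ?_ (smul_ne_zero ?_ (CD.basis_ne_zero n _))) <;>
    [rcases hs1 with rfl | rfl; rcases hs4 with rfl | rfl] <;> norm_num
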